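/- For a feature-separable continuously differentiable model, Integrated Gradients attributions reduce to coordinate-wise score differences: let c ∈ ℝ, f_j : ℝ → ℝ continuously differentiable for each j ∈ Fin n, and f(x) = c + ∑_{j} f_j(x_j). Then for all points a, b ∈ ℝⁿ and every feature i, IG_i(f,a,b) = f_i(b_i) − f_i(a_i). -/

import Mathlib

noncomputable def IG {n : ℕ} (f : (Fin n → ℝ) → ℝ) (a b : Fin n → ℝ) (i : Fin n) : ℝ :=
  (b i - a i) * ∫ t in (0:ℝ)..1, fderiv ℝ f (fun j => a j + t * (b j - a j)) (Pi.single i 1)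

theorem IG_separable (n : ℕ) (c : ℝ) (fs : Fin n → ℝ → ℝ)
    (hfs : ∀ j, ContDiff ℝ 1 (fs j))
    (f : (Fin n → ℝ) → ℝ) (hf : f = fun x => c + ∑ j, fs j (x j))
    (a b : Fin n → ℝ) (i : Fin n) :
    IG f a b i = fs i (b i) - fs i (a i) := by
  have hd : ∀ j y, HasDerivAt (fs j) (deriv (fs j) y) y := fun j y =>
    ((hfs j).differentiable one_ne_zero y).hasDerivAt
  have key : ∀ x : Fin n → ℝ, fderiv ℝ f x (Pi.single i 1) = deriv (fs i) (x i) := by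
    intro x
    have h1 : HasFDerivAt f
        (∑ j, (ContinuousLinearMap.proj j : (Fin n → ℝ) →L[ℝ] ℝ).smulRight (deriv (fs j) (x j))) x := by
      rw [hf]
      have h2 : HasFDerivAt (fun y : Fin n → ℝ => ∑ j, fs j (y j))
          (∑ j, (ContinuousLinearMap.proj j : (Fin n → ℝ) →L[ℝ] ℝ).smulRight (deriv (fs j) (x j))) x := by
        apply HasFDerivAt.fun_sum
        intro j _
        exact ((hd j (x j)).hasFDerivAt.comp x (ContinuousLinearMap.proj j : (Fin n → ℝ) →L[ℝ] ℝ).hasFDerivAt)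
      simpa using h2.const_add c
    rw [h1.fderiv]
    simp [ContinuousLinearMap.proj, Pi.single_apply]
  simp only [IG, key]
  set A := a i
  set B := b i
  have hsub : ∫ t in (0:ℝ)..1, (B - A) • deriv (fs i) (A + t * (B - A))
      = ∫ u in (A + 0 * (B - A))..(A + 1 * (B - A)), deriv (fs i) u := by
    have := intervalIntegral.integral_comp_smul_deriv (a := (0:ℝ)) (b := 1)
      (f := fun t => A + t * (B - A)) (f' := fun _ => B - A) (g := deriv (fs i))
      (fun t _ => by simpa using ((hasDerivAt_id t).mul_const (B - A)).const_add A)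
      (continuous_const.continuousOn)
      ((hfs i).continuous_deriv le_rfl)
    simpa [Function.comp] using this
  simp only [smul_eq_mul] at hsub
  rw [← intervalIntegral.integral_const_mul, hsub]
  simp only [zero_mul, one_mul, add_zero, add_sub_cancel]
  exact intervalIntegral.integral_deriv_eq_sub (fun x _ => (hfs i).differentiable one_ne_zero x)
    (((hfs i).continuous_deriv le_rfl).intervalIntegrable _ _)
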